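/- Let α ∈ [1,2) and C_α > 0. Consider the three points z₁* = (−1,0), z₂* = (1,0), z₃* = (0,0) in ℝ² with intensities a₁ = 1, a₂ = 1, a₃ = −2^{−α}. Then this configuration is a stationary solution of the α-point-vortex system: for every i ∈ {1,2,3}, Σ_{j≠i} a_j K_α(z_i*, z_j*) = 0. -/

import Mathlib

noncomputable def biotSavartK (α Cα : ℝ) (x y : ℂ) : ℂ :=
  (Cα / ‖x - y‖ ^ (α + 1)) • (Complex.I * (x - y))

theorem three_vortex_configuration_stationary
    (α : ℝ) (hα : 1 ≤ α) (hα' : α < 2) (Cα : ℝ) (hCα : 0 < Cα) :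
    ∀ i : Fin 3,
      ∑ j ∈ Finset.univ.erase i,
        (![1, 1, -(2:ℝ) ^ (-α)] j) • biotSavartK α Cα (![-1, 1, 0] i) (![-1, 1, 0] j) = 0 := by
  intro i
  rw [Finset.sum_erase_eq_sub (Finset.mem_univ i), Fin.sum_univ_three]
  have hn2 : ‖(-1 - 1 : ℂ)‖ = 2 := by norm_num [Complex.norm_def, Complex.normSq_apply]
  have hn2' : ‖(1 - -1 : ℂ)‖ = 2 := by norm_num [Complex.norm_def, Complex.normSq_apply]
  have hn1 : ‖(-1 - 0 : ℂ)‖ = 1 := by norm_num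
  have hn1' : ‖(1 - 0 : ℂ)‖ = 1 := by norm_num
  have hn1'' : ‖(0 - -1 : ℂ)‖ = 1 := by norm_num
  have hn1''' : ‖(0 - 1 : ℂ)‖ = 1 := by norm_num
  have h2p : (2:ℝ) ^ (α + 1) = 2 ^ α * 2 := by
    rw [Real.rpow_add (by norm_num), Real.rpow_one]
  have h2q : (2:ℝ) ^ (1 + α) = 2 * 2 ^ α := by
    rw [Real.rpow_add (by norm_num), Real.rpow_one]
  have habs : ‖(2:ℂ)‖ = 2 := by norm_num
  have hnc : ‖(2:ℂ)‖ = 2 := by norm_num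
  have h2pos : (0:ℝ) < 2 ^ α := Real.rpow_pos_of_pos (by norm_num) α
  fin_cases i <;>
    simp [biotSavartK, hn2, hn2', hn1, hn1', hn1'', hn1''', h2p, h2q, habs, hnc,
      Real.one_rpow, Real.rpow_neg_one, Real.rpow_natCast, Complex.ofReal_div,
      Real.rpow_neg (by norm_num : (0:ℝ) ≤ 2)] <;>
    · field_simp
      try rw [show ‖(1 + 1 : ℂ)‖ = 2 from by norm_num, h2p]
      push_cast
      ring
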